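/- Let (X, τ) be a separable metrizable space for which dim (X, τ) ≤ 1 fails, and let M ⊆ X be a Gδ-subset whose subspace satisfies dim M ≤ 0. Then the metrizable space (X, τ(M)) is not separable. (In particular, the complement X \ M is uncountable.) -/

import Mathlib

/-- The Bing–Hanner extension `τ(M)` of a topology `τ` on `X` determined by a subset `M ⊆ X`:
its open sets are exactly the sets of the form `U ∪ K` with `U` a `τ`-open set and
`K ⊆ X \ M`. -/
def bingHanner {X : Type*} (τ : TopologicalSpace X) (M : Set X) : TopologicalSpace X where
  IsOpen O := ∃ U K : Set X, τ.IsOpen U ∧ K ⊆ Mᶜ ∧ O = U ∪ K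
  isOpen_univ := ⟨Set.univ, ∅, τ.isOpen_univ, by simp, by simp⟩
  isOpen_inter := by
    rintro s t ⟨U₁, K₁, hU₁, hK₁, rfl⟩ ⟨U₂, K₂, hU₂, hK₂, rfl⟩
    refine ⟨U₁ ∩ U₂, ((U₁ ∪ K₁) ∩ (U₂ ∪ K₂)) \ (U₁ ∩ U₂),
      τ.isOpen_inter _ _ hU₁ hU₂, ?_, ?_⟩
    · rintro x ⟨⟨h1, h2⟩, hn⟩
      rcases h1 with h1 | h1
      · rcases h2 with h2 | h2
        · exact absurd ⟨h1, h2⟩ hn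
        · exact hK₂ h2
      · exact hK₁ h1
    · have hsub : U₁ ∩ U₂ ⊆ (U₁ ∪ K₁) ∩ (U₂ ∪ K₂) :=
        fun x hx => ⟨Or.inl hx.1, Or.inl hx.2⟩
      exact (Set.union_diff_cancel hsub).symm
  isOpen_sUnion := by
    intro S hS
    choose U K hU hK hEq using hS
    refine ⟨⋃ s, ⋃ h : s ∈ S, U s h, ⋃ s, ⋃ h : s ∈ S, K s h, ?_, ?_, ?_⟩
    · letI := τ
      exact isOpen_iUnion fun s => isOpen_iUnion fun h => hU s h
    · exact Set.iUnion_subset fun s => Set.iUnion_subset fun h => hK s h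
    · ext x
      simp only [Set.mem_sUnion, Set.mem_union, Set.mem_iUnion]
      constructor
      · rintro ⟨s, hs, hx⟩
        rw [hEq s hs] at hx
        rcases hx with hx | hx
        · exact Or.inl ⟨s, hs, hx⟩
        · exact Or.inr ⟨s, hs, hx⟩
      · rintro (⟨s, hs, hx⟩ | ⟨s, hs, hx⟩)
        · exact ⟨s, hs, by rw [hEq s hs]; exact Or.inl hx⟩
        · exact ⟨s, hs, by rw [hEq s hs]; exact Or.inr hx⟩

/-- `covDimLE t n` : the covering dimension of `(X, t)` is at most `n`, i.e. every finite
open cover admits a finite open refinement covering `X` in which any `n + 2` pairwise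
distinct members have empty intersection. -/
def covDimLE {X : Type*} (t : TopologicalSpace X) (n : ℕ) : Prop :=
  ∀ C : Set (Set X), C.Finite → (∀ U ∈ C, t.IsOpen U) → ⋃₀ C = Set.univ →
    ∃ V : Set (Set X), V.Finite ∧ (∀ U ∈ V, t.IsOpen U) ∧ ⋃₀ V = Set.univ ∧
      (∀ U ∈ V, ∃ W ∈ C, U ⊆ W) ∧
      ∀ F : Finset (Set X), ↑F ⊆ V → F.card = n + 2 → ⋂₀ (F : Set (Set X)) = ∅

/-- `IndLE0 t` : the large inductive dimension of `(Z, t)` is at most `0`, i.e. any two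
disjoint closed sets are separated by a clopen set. -/
def IndLE0 {Z : Type*} (t : TopologicalSpace Z) : Prop :=
  ∀ A B : Set Z, @IsClosed Z t A → @IsClosed Z t B → Disjoint A B →
    ∃ U : Set Z, t.IsOpen U ∧ @IsClosed Z t U ∧ A ⊆ U ∧ U ∩ B = ∅

/-- `indLE0 t` : the small inductive dimension of `(Z, t)` is at most `0`, i.e. every point
has a neighborhood basis of clopen sets. -/
def indLE0 {Z : Type*} (t : TopologicalSpace Z) : Prop :=
  ∀ (x : Z) (O : Set Z), t.IsOpen O → x ∈ O →
    ∃ U : Set Z, t.IsOpen U ∧ @IsClosed Z t U ∧ x ∈ U ∧ U ⊆ O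

/-- `L` is a partition between `A` and `B` in `(X, t)`. -/
def isPartitionBetween {X : Type*} (t : TopologicalSpace X) (A B L : Set X) : Prop :=
  ∃ U V : Set X, t.IsOpen U ∧ t.IsOpen V ∧ Disjoint U V ∧ A ⊆ U ∧ B ⊆ V ∧ L = (U ∪ V)ᶜ

section BHAux

open Set Topology EMetric

section Countable0

variable {Y : Type*} [MetricSpace Y] [Countable Y]

lemma bh_clopen_separation {A B : Set Y} (hA : IsClosed A) (hB : IsClosed B)
    (hd : Disjoint A B) :
    ∃ U : Set Y, IsOpen U ∧ IsClosed U ∧ A ⊆ U ∧ U ∩ B = ∅ := by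
  obtain ⟨f, hf0, hf1, -⟩ := exists_continuous_zero_one_of_isClosed hA hB hd
  have hr : ∃ r ∈ Set.Ioo (0:ℝ) 1, r ∉ Set.range (f : Y → ℝ) := by
    by_contra h
    push_neg at h
    have hcnt : (Set.Ioo (0:ℝ) 1).Countable := (Set.countable_range _).mono h
    have h1 : (Cardinal.mk (Set.Ioo (0:ℝ) 1)) ≤ Cardinal.aleph0 :=
      Cardinal.mk_le_aleph0_iff.2 (Set.countable_coe_iff.2 hcnt)
    rw [Cardinal.mk_Ioo_real one_pos] at h1
    exact absurd h1 (not_le.2 Cardinal.aleph0_lt_continuum)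
  obtain ⟨r, ⟨hr0, hr1⟩, hrn⟩ := hr
  refine ⟨(f : Y → ℝ) ⁻¹' Set.Iio r, isOpen_Iio.preimage f.continuous, ?_, ?_, ?_⟩
  · have he : (f : Y → ℝ) ⁻¹' Set.Iio r = (f : Y → ℝ) ⁻¹' Set.Iic r := by
      ext y
      simp only [mem_preimage, mem_Iio, mem_Iic]
      exact ⟨le_of_lt, fun h => h.lt_of_ne fun he => hrn ⟨y, he⟩⟩
    rw [he]
    exact isClosed_Iic.preimage f.continuous
  · intro a ha
    have : f a = 0 := hf0 ha
    simp only [mem_preimage, mem_Iio, this]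
    exact hr0
  · ext y
    simp only [mem_inter_iff, mem_preimage, mem_Iio, mem_empty_iff_false, iff_false, not_and]
    intro hy hyB
    rw [hf1 hyB] at hy
    exact absurd (hy.trans hr1) (lt_irrefl 1)

lemma bh_disjoint_clopen_refine :
    ∀ l : List (Set Y), (∀ O ∈ l, IsOpen O) → ∀ R : Set Y, IsClosed R →
      R ⊆ ⋃₀ {O | O ∈ l} →
    ∃ v : List (Set Y),
      List.Forall₂ (fun V O => IsOpen V ∧ IsClosed V ∧ V ⊆ O) v l ∧
      R ⊆ ⋃₀ {V | V ∈ v} ∧ v.Pairwise (fun a b => a ∩ b = ∅) := by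
  intro l
  induction l with
  | nil =>
    intro _ R _ hRs
    exact ⟨[], List.Forall₂.nil, by simpa using hRs, List.Pairwise.nil⟩
  | cons O l ih =>
    intro hl R hRc hRs
    have hO : IsOpen O := hl O List.mem_cons_self
    have hlo : ∀ O' ∈ l, IsOpen O' := fun O' h => hl O' (List.mem_cons_of_mem _ h)
    have hUl : IsOpen (⋃₀ {O' | O' ∈ l}) := isOpen_sUnion (fun t ht => hlo t ht)
    have hA : IsClosed (R \ ⋃₀ {O' | O' ∈ l}) := hRc.sdiff hUl
    have hAO : R \ ⋃₀ {O' | O' ∈ l} ⊆ O := by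
      intro x ⟨hxR, hxn⟩
      rcases hRs hxR with ⟨t, ht, hxt⟩
      rcases List.mem_cons.1 ht with rfl | ht'
      · exact hxt
      · exact absurd ⟨t, ht', hxt⟩ hxn
    have hd : Disjoint (R \ ⋃₀ {O' | O' ∈ l}) Oᶜ :=
      Set.disjoint_left.2 fun x hx hxc => hxc (hAO hx)
    obtain ⟨U, hUo, hUc, hAU, hUB⟩ := bh_clopen_separation hA (isClosed_compl_iff.2 hO) hd
    have hUO : U ⊆ O := by
      intro x hx
      by_contra hxO
      have : x ∈ U ∩ Oᶜ := ⟨hx, hxO⟩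
      rw [hUB] at this
      exact this.elim
    have hR'c : IsClosed (R \ U) := hRc.sdiff hUo
    have hR's : R \ U ⊆ ⋃₀ {O' | O' ∈ l} := by
      intro x ⟨hxR, hxU⟩
      by_contra hxn
      exact hxU (hAU ⟨hxR, hxn⟩)
    obtain ⟨v, hv, hvcov, hvp⟩ := ih hlo (R \ U) hR'c hR's
    refine ⟨U :: v.map (· \ U), ?_, ?_, ?_⟩
    · refine List.Forall₂.cons ⟨hUo, hUc, hUO⟩ ?_
      rw [List.forall₂_map_left_iff]
      refine hv.imp ?_
      rintro V O' ⟨h1, h2, h3⟩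
      exact ⟨h1.sdiff hUc, h2.sdiff hUo, fun x hx => h3 hx.1⟩
    · intro x hxR
      by_cases hxU : x ∈ U
      · exact ⟨U, List.mem_cons_self, hxU⟩
      · rcases hvcov ⟨hxR, hxU⟩ with ⟨V, hV, hxV⟩
        exact ⟨V \ U, List.mem_cons_of_mem _ (List.mem_map_of_mem hV), ⟨hxV, hxU⟩⟩
    · refine List.Pairwise.cons ?_ ?_
      · intro b hb
        rcases List.mem_map.1 hb with ⟨V, _, rfl⟩
        refine Set.eq_empty_iff_forall_notMem.2 fun x hx => ?_
        exact hx.2.2 hx.1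
      · rw [List.pairwise_map]
        refine hvp.imp ?_
        intro a b hab
        refine Set.eq_empty_iff_forall_notMem.2 fun x hx => ?_
        have hm : x ∈ a ∩ b := ⟨hx.1.1, hx.2.1⟩
        rw [hab] at hm
        exact hm

lemma bh_countable_covDim0 : covDimLE (inferInstance : TopologicalSpace Y) 0 := by
  classical
  intro C hCf hCo hCu
  obtain ⟨l, hlC⟩ : ∃ l : List (Set Y), ∀ O, O ∈ l ↔ O ∈ C :=
    ⟨hCf.toFinset.toList, fun O => by
      rw [Finset.mem_toList, Set.Finite.mem_toFinset]⟩
  have hlset : {O | O ∈ l} = C := Set.ext fun O => hlC O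
  obtain ⟨v, hv, hvcov, hvp⟩ := bh_disjoint_clopen_refine l
    (fun O hO => hCo O ((hlC O).1 hO)) Set.univ isClosed_univ
    (by rw [hlset, hCu])
  -- extract per-member facts from Forall₂
  have hmem : ∀ V ∈ v, IsOpen V ∧ IsClosed V ∧ ∃ O ∈ C, V ⊆ O := by
    intro V hV
    obtain ⟨i, hi⟩ := List.get_of_mem hV
    have hlen : v.length = l.length := hv.length_eq
    have hrel := (List.forall₂_iff_get.1 hv).2 i.1 (by omega)
    rw [hi] at hrel
    have hrel' := hrel (by omega)
    exact ⟨hrel'.1, hrel'.2.1, l.get ⟨i.1, by omega⟩,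
      (hlC _).1 (l.get_mem _), hrel'.2.2⟩
  refine ⟨{V | V ∈ v}, v.finite_toSet, fun V hV => (hmem V hV).1, ?_, ?_, ?_⟩
  · apply Set.eq_univ_of_univ_subset
    exact hvcov
  · intro V hV
    exact (hmem V hV).2.2
  · intro F hF hcard
    obtain ⟨a, b, hab, rfl⟩ := Finset.card_eq_two.1 hcard
    have ha : a ∈ v := hF (by simp)
    have hb : b ∈ v := hF (by simp)
    have hdis : a ∩ b = ∅ := by
      have hsymm : Symmetric (fun s t : Set Y => s ∩ t = ∅) := by
        intro s t h
        rw [Set.inter_comm]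
        exact h
      haveI : Std.Symm (fun s t : Set Y => s ∩ t = ∅) := ⟨fun a b h => hsymm h⟩
      exact List.Pairwise.forall hvp ha hb hab
    rw [Finset.coe_insert, Finset.coe_singleton, Set.sInter_insert, Set.sInter_singleton]
    exact hdis

end Countable0

section Main

variable {X : Type*} [MetricSpace X]

lemma bh_trace_family (S : Set X)
    (h0 : covDimLE (instTopologicalSpaceSubtype : TopologicalSpace S) 0)
    (W : Set (Set X)) (hWf : W.Finite) (hWo : ∀ U ∈ W, IsOpen U)
    (hWc : ⋃₀ W = Set.univ) :
    ∃ E : Set (Set X), E.Finite ∧ (∀ e ∈ E, e ⊆ S) ∧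
      (∀ e ∈ E, closure e ∩ S ⊆ e) ∧ ⋃₀ E = S ∧
      (∀ e ∈ E, ∀ e' ∈ E, e ≠ e' → e ∩ e' = ∅) ∧
      ∀ e ∈ E, ∃ w ∈ W, e ⊆ w := by
  classical
  set val : S → X := Subtype.val with hval
  have hcov : ⋃₀ ((fun w => val ⁻¹' w) '' W) = Set.univ := by
    apply Set.eq_univ_of_forall
    intro x
    have : (x : X) ∈ ⋃₀ W := by rw [hWc]; trivial
    obtain ⟨w, hw, hxw⟩ := this
    exact ⟨val ⁻¹' w, Set.mem_image_of_mem _ hw, hxw⟩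
  obtain ⟨V, hVf, hVo, hVu, hVr, hVd⟩ := h0 ((fun w => val ⁻¹' w) '' W)
    (hWf.image _)
    (by
      rintro u ⟨w, hw, rfl⟩
      exact (hWo w hw).preimage continuous_subtype_val)
    hcov
  -- pairwise disjointness of members of V
  have hVdis : ∀ u ∈ V, ∀ u' ∈ V, u ≠ u' → u ∩ u' = ∅ := by
    intro u hu u' hu' hne
    have hF : (↑({u, u'} : Finset (Set S)) : Set (Set S)) ⊆ V := by
      intro t ht
      simp only [Finset.coe_insert, Finset.coe_singleton, Set.mem_insert_iff,
        Set.mem_singleton_iff] at ht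
      rcases ht with rfl | rfl
      · exact hu
      · exact hu'
    have hcard : ({u, u'} : Finset (Set S)).card = 2 := by
      rw [Finset.card_insert_of_notMem (by simpa using hne), Finset.card_singleton]
    have := hVd {u, u'} hF hcard
    rwa [Finset.coe_insert, Finset.coe_singleton, Set.sInter_insert,
      Set.sInter_singleton] at this
  -- each member of V is closed
  have hVcl : ∀ u ∈ V, IsClosed u := by
    intro u hu
    have hco : uᶜ = ⋃₀ (V \ {u}) := by
      ext x
      constructor
      · intro hx
        have : x ∈ ⋃₀ V := by rw [hVu]; trivial
        obtain ⟨u', hu', hxu'⟩ := this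
        have : u' ≠ u := fun h => hx (h ▸ hxu')
        exact ⟨u', ⟨hu', this⟩, hxu'⟩
      · rintro ⟨u', ⟨hu', hne⟩, hxu'⟩ hxu
        have := hVdis u hu u' hu' (Ne.symm hne)
        have : x ∈ u ∩ u' := ⟨hxu, hxu'⟩
        rw [hVdis u hu u' hu' (Ne.symm hne)] at this
        exact this
    rw [← isOpen_compl_iff, hco]
    exact isOpen_sUnion fun t ht => hVo t ht.1
  refine ⟨(fun u => val '' u) '' V, hVf.image _, ?_, ?_, ?_, ?_, ?_⟩
  · rintro e ⟨u, hu, rfl⟩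
    exact Subtype.coe_image_subset S u
  · rintro e ⟨u, hu, rfl⟩
    intro x ⟨hxc, hxS⟩
    have : (⟨x, hxS⟩ : S) ∈ closure u := by
      rw [closure_subtype]
      exact hxc
    rw [(hVcl u hu).closure_eq] at this
    exact ⟨⟨x, hxS⟩, this, rfl⟩
  · apply Set.Subset.antisymm
    · rintro x ⟨e, ⟨u, hu, rfl⟩, hx⟩
      exact Subtype.coe_image_subset S u hx
    · intro x hxS
      have : (⟨x, hxS⟩ : S) ∈ ⋃₀ V := by rw [hVu]; trivial
      obtain ⟨u, hu, hxu⟩ := this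
      exact ⟨val '' u, Set.mem_image_of_mem _ hu, ⟨x, hxS⟩, hxu, rfl⟩
  · rintro e ⟨u, hu, rfl⟩ e' ⟨u', hu', rfl⟩ hne
    have hne' : u ≠ u' := fun h => hne (by rw [h])
    rw [← Set.image_inter Subtype.coe_injective, hVdis u hu u' hu' hne',
      Set.image_empty]
  · rintro e ⟨u, hu, rfl⟩
    obtain ⟨uw, ⟨w, hw, rfl⟩, huw⟩ := hVr u hu
    refine ⟨w, hw, ?_⟩
    rintro x ⟨y, hy, rfl⟩
    exact huw hy

lemma bh_key (M : Set X)
    (hM : covDimLE (instTopologicalSpaceSubtype : TopologicalSpace M) 0)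
    (hc : (Mᶜ).Countable) : covDimLE (inferInstance : TopologicalSpace X) 1 := by
  classical
  intro C hCf hCo hCu
  haveI : Countable (Mᶜ : Set X) := hc.to_subtype
  have h2 : covDimLE (instTopologicalSpaceSubtype : TopologicalSpace (Mᶜ : Set X)) 0 :=
    bh_countable_covDim0
  obtain ⟨E₁, hE₁f, hE₁s, hE₁cl, hE₁u, hE₁d, hE₁r⟩ := bh_trace_family M hM C hCf hCo hCu
  obtain ⟨E₂, hE₂f, hE₂s, hE₂cl, hE₂u, hE₂d, hE₂r⟩ := bh_trace_family Mᶜ h2 C hCf hCo hCu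
  have hch : ∀ e : Set X, ∃ wch : Set X, e ∈ E₁ ∪ E₂ → wch ∈ C ∧ e ⊆ wch := by
    intro e
    by_cases he : e ∈ E₁ ∪ E₂
    · rcases he with he | he
      · obtain ⟨wch, hw, hew⟩ := hE₁r e he
        exact ⟨wch, fun _ => ⟨hw, hew⟩⟩
      · obtain ⟨wch, hw, hew⟩ := hE₂r e he
        exact ⟨wch, fun _ => ⟨hw, hew⟩⟩
    · exact ⟨Set.univ, fun h => absurd h he⟩
  choose w hw using hch
  set G : Set (Set X) → Set X → Set X := fun E e =>
    {x | infEdist x e < infEdist x (⋃₀ (E \ {e}))} ∩ w e with hG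
  have fam : ∀ (E : Set (Set X)) (S : Set X), E.Finite →
      (∀ e ∈ E, closure e ∩ S ⊆ e) → ⋃₀ E = S →
      (∀ e ∈ E, ∀ e' ∈ E, e ≠ e' → e ∩ e' = ∅) → (∀ e ∈ E, e ∈ E₁ ∪ E₂) →
      (∀ e ∈ E, IsOpen (G E e)) ∧
      (∀ e ∈ E, ∀ e' ∈ E, e ≠ e' → G E e ∩ G E e' = ∅) ∧
      (S ⊆ ⋃₀ ((G E) '' E)) ∧ (∀ e ∈ E, G E e ⊆ w e ∧ w e ∈ C) := by
    intro E S hEf hEcl hEu hEd hEmem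
    refine ⟨?_, ?_, ?_, ?_⟩
    · intro e he
      refine IsOpen.inter ?_ (hCo _ (hw e (hEmem e he)).1)
      exact isOpen_lt continuous_infEdist continuous_infEdist
    · intro e he e' he' hne
      refine Set.eq_empty_iff_forall_notMem.2 fun x hx => ?_
      have h1 : infEdist x e < infEdist x (⋃₀ (E \ {e})) := hx.1.1
      have h2 : infEdist x e' < infEdist x (⋃₀ (E \ {e'})) := hx.2.1
      have hsub : e' ⊆ ⋃₀ (E \ {e}) := fun y hy => ⟨e', ⟨he', hne ∘ Eq.symm⟩, hy⟩
      have hsub' : e ⊆ ⋃₀ (E \ {e'}) := fun y hy => ⟨e, ⟨he, hne⟩, hy⟩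
      have := h1.trans_le (infEdist_anti hsub)
      have := (this.trans h2).trans_le (infEdist_anti hsub')
      exact lt_irrefl _ this
    · intro x hxS
      have : x ∈ ⋃₀ E := by rw [hEu]; exact hxS
      obtain ⟨e, he, hxe⟩ := this
      refine ⟨G E e, Set.mem_image_of_mem _ he, ?_, (hw e (hEmem e he)).2 hxe⟩
      show infEdist x e < infEdist x (⋃₀ (E \ {e}))
      have h0 : infEdist x e = 0 := infEdist_zero_of_mem hxe
      rw [h0]
      rw [pos_iff_ne_zero]
      intro hz
      have hxc : x ∈ closure (⋃₀ (E \ {e})) := mem_closure_iff_infEdist_zero.2 hz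
      rw [Set.Finite.closure_sUnion hEf.diff] at hxc
      simp only [Set.mem_iUnion] at hxc
      obtain ⟨e', he', hxe'⟩ := hxc
      obtain ⟨he'E, hne⟩ := he'
      have hxe'' : x ∈ e' := hEcl e' he'E ⟨hxe', hxS⟩
      have : x ∈ e ∩ e' := ⟨hxe, hxe''⟩
      rw [hEd e he e' he'E (fun h => hne (h ▸ rfl))] at this
      exact this
    · intro e he
      exact ⟨Set.inter_subset_right, (hw e (hEmem e he)).1⟩
  obtain ⟨ho₁, hd₁, hc₁, hr₁⟩ := fam E₁ M hE₁f hE₁cl hE₁u hE₁d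
    (fun e he => Or.inl he)
  obtain ⟨ho₂, hd₂, hc₂, hr₂⟩ := fam E₂ Mᶜ hE₂f hE₂cl hE₂u hE₂d
    (fun e he => Or.inr he)
  refine ⟨(G E₁) '' E₁ ∪ (G E₂) '' E₂, (hE₁f.image _).union (hE₂f.image _),
    ?_, ?_, ?_, ?_⟩
  · rintro u (⟨e, he, rfl⟩ | ⟨e, he, rfl⟩)
    · exact ho₁ e he
    · exact ho₂ e he
  · apply Set.eq_univ_of_forall
    intro x
    by_cases hxM : x ∈ M
    · obtain ⟨u, hu, hxu⟩ := hc₁ hxM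
      exact ⟨u, Or.inl hu, hxu⟩
    · obtain ⟨u, hu, hxu⟩ := hc₂ hxM
      exact ⟨u, Or.inr hu, hxu⟩
  · rintro u (⟨e, he, rfl⟩ | ⟨e, he, rfl⟩)
    · exact ⟨w e, (hr₁ e he).2, (hr₁ e he).1⟩
    · exact ⟨w e, (hr₂ e he).2, (hr₂ e he).1⟩
  · intro F hF hcard
    obtain ⟨a, b, c, hab, hac, hbc, rfl⟩ := Finset.card_eq_three.1 hcard
    have ha : a ∈ (G E₁) '' E₁ ∪ (G E₂) '' E₂ := hF (by simp)
    have hb : b ∈ (G E₁) '' E₁ ∪ (G E₂) '' E₂ := hF (by simp)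
    have hc' : c ∈ (G E₁) '' E₁ ∪ (G E₂) '' E₂ := hF (by simp)
    have key : ∀ i : Fin 2, ∀ s t : Set X,
        s ∈ (G (if i = 0 then E₁ else E₂)) '' (if i = 0 then E₁ else E₂) →
        t ∈ (G (if i = 0 then E₁ else E₂)) '' (if i = 0 then E₁ else E₂) →
        s ≠ t → s ∩ t = ∅ := by
      intro i s t hs ht hst
      rcases hs with ⟨e, he, rfl⟩
      rcases ht with ⟨e', he', rfl⟩
      have hne : e ≠ e' := fun h => hst (by rw [h])
      by_cases hi : i = 0
      · simp only [hi, if_pos] at he he' ⊢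
        exact hd₁ e he e' he' hne
      · simp only [if_neg hi] at he he' ⊢
        exact hd₂ e he e' he' hne
    have pair : ∃ s t : Set X, s ∈ ({a, b, c} : Finset (Set X)) ∧
        t ∈ ({a, b, c} : Finset (Set X)) ∧ s ≠ t ∧ s ∩ t = ∅ := by
      have disj₁ : ∀ s t : Set X, s ∈ (G E₁) '' E₁ → t ∈ (G E₁) '' E₁ →
          s ≠ t → s ∩ t = ∅ := fun s t hs ht hst => key 0 s t (by simpa) (by simpa) hst
      have disj₂ : ∀ s t : Set X, s ∈ (G E₂) '' E₂ → t ∈ (G E₂) '' E₂ →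
          s ≠ t → s ∩ t = ∅ := fun s t hs ht hst => key 1 s t (by simpa) (by simpa) hst
      rcases ha with ha1 | ha2
      · rcases hb with hb1 | hb2
        · exact ⟨a, b, by simp, by simp, hab, disj₁ a b ha1 hb1 hab⟩
        · rcases hc' with hc1 | hc2
          · exact ⟨a, c, by simp, by simp, hac, disj₁ a c ha1 hc1 hac⟩
          · exact ⟨b, c, by simp, by simp, hbc, disj₂ b c hb2 hc2 hbc⟩
      · rcases hb with hb1 | hb2
        · rcases hc' with hc1 | hc2
          · exact ⟨b, c, by simp, by simp, hbc, disj₁ b c hb1 hc1 hbc⟩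
          · exact ⟨a, c, by simp, by simp, hac, disj₂ a c ha2 hc2 hac⟩
        · exact ⟨a, b, by simp, by simp, hab, disj₂ a b ha2 hb2 hab⟩
    obtain ⟨s, t, hs, ht, hst, hdisj⟩ := pair
    refine Set.eq_empty_iff_forall_notMem.2 fun x hx => ?_
    have hxs : x ∈ s := hx s (by exact_mod_cast hs)
    have hxt : x ∈ t := hx t (by exact_mod_cast ht)
    have : x ∈ s ∩ t := ⟨hxs, hxt⟩
    rw [hdisj] at this
    exact this

end Main

lemma bh_sep_countable {X : Type*} (t : TopologicalSpace X) (M : Set X)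
    (h : @TopologicalSpace.SeparableSpace X (bingHanner t M)) : (Mᶜ).Countable := by
  letI : TopologicalSpace X := bingHanner t M
  obtain ⟨D, hDc, hDd⟩ := h.exists_countable_dense
  refine hDc.mono ?_
  intro x hx
  have hopen : IsOpen {x} :=
    ⟨∅, {x}, @isOpen_empty X t, by simpa using hx, by simp⟩
  obtain ⟨y, hy1, hy2⟩ := hDd.inter_open_nonempty {x} hopen ⟨x, rfl⟩
  rw [Set.mem_singleton_iff] at hy1
  exact hy1 ▸ hy2

end BHAux

/-- If `(X, τ)` is separable metrizable and `dim (X, τ) ≤ 1` fails,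
then for every `Gδ`-set `M` with `dim M ≤ 0` the metrizable space `(X, τ(M))` is not
separable; in particular `X \ M` is uncountable. -/
theorem bingHanner_not_separable_of_dim_ge_two {X : Type*} (τ : TopologicalSpace X)
    (hsep : @TopologicalSpace.SeparableSpace X τ)
    (hmet : @TopologicalSpace.MetrizableSpace X τ) (hdim : ¬ covDimLE τ 1)
    (M : Set X) (hGdelta : @IsGδ X τ M)
    (hM : covDimLE (TopologicalSpace.induced (Subtype.val : M → X) τ) 0) :
    ¬ @TopologicalSpace.SeparableSpace X (bingHanner τ M) ∧ ¬ (Mᶜ).Countable := by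
  classical
  letI : TopologicalSpace X := τ
  letI : MetricSpace X := TopologicalSpace.metrizableSpaceMetric X
  have hcnt : ¬ (Mᶜ).Countable := fun hc => hdim (bh_key M hM hc)
  exact ⟨fun hs => hcnt (bh_sep_countable _ M hs), hcnt⟩
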